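/- (Pointwise consequences of D = 0, algebraic form of Proposition 3.1 (1)–(3).) Let n ≥ 3, let m, λ, ρ be real numbers with m ≠ 0, let Ric be a symmetric bilinear form on V with scal := Σ_i Ric(e_i,e_i), and let v ≠ 0 and p in V satisfy scal = (n−1)λ − (m−1)ρ and Ric(X,v) = ρ⟨X,v⟩ − (m/2)⟨X,p⟩ for all X ∈ V. If the D-tensor built from Ric, scal and v vanishes identically, then: (1) p is a scalar multiple of v; (2) v is an eigenvector of Ric, i.e., there is κ ∈ ℝ with Ric(X,v) = κ⟨X,v⟩ for all X; (3) there is μ ∈ ℝ with Ric(a,b) = μ⟨a,b⟩ for all a,b ⊥ v. In particular Ric has at most two distinct eigenvalues: one in the direction of v and one of multiplicity at least n−1 on v^⊥. -/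

import Mathlib

open scoped InnerProductSpace

/-- Pointwise consequences of `D = 0` (algebraic form of Proposition 3.1 (1)–(3)):
`p` is a multiple of `v`, `v` is an eigenvector of `Ric`, and `Ric` is a multiple
of the metric on the orthogonal complement of `v`. -/
theorem stmt_6 (n : ℕ) (hn : 3 ≤ n) (m lam rho : ℝ) (hm : m ≠ 0)
    (e : OrthonormalBasis (Fin n) ℝ (EuclideanSpace ℝ (Fin n)))
    (Ric : EuclideanSpace ℝ (Fin n) →ₗ[ℝ] EuclideanSpace ℝ (Fin n) →ₗ[ℝ] ℝ)
    (hRicSymm : ∀ X Y, Ric X Y = Ric Y X)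
    (scal : ℝ) (hscal : scal = ∑ i, Ric (e i) (e i))
    (v p : EuclideanSpace ℝ (Fin n)) (hv : v ≠ 0)
    (hscalEq : scal = ((n : ℝ) - 1) * lam - (m - 1) * rho)
    (hRicv : ∀ X, Ric X v = rho * ⟪X, v⟫_ℝ - (m / 2) * ⟪X, p⟫_ℝ)
    (D : EuclideanSpace ℝ (Fin n) → EuclideanSpace ℝ (Fin n) →
      EuclideanSpace ℝ (Fin n) → ℝ)
    (hD : ∀ X Y Z, D X Y Z =
      (1 / (((n : ℝ) - 1) * ((n : ℝ) - 2))) *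
        (Ric X v * ⟪Y, Z⟫_ℝ - Ric Y v * ⟪X, Z⟫_ℝ)
      + (1 / ((n : ℝ) - 2)) * (Ric Y Z * ⟪X, v⟫_ℝ - Ric X Z * ⟪Y, v⟫_ℝ)
      - (scal / (((n : ℝ) - 1) * ((n : ℝ) - 2))) *
          (⟪X, v⟫_ℝ * ⟪Y, Z⟫_ℝ - ⟪Y, v⟫_ℝ * ⟪X, Z⟫_ℝ))
    (hD0 : ∀ X Y Z, D X Y Z = 0) :
    (∃ c : ℝ, p = c • v) ∧
    (∃ κ : ℝ, ∀ X, Ric X v = κ * ⟪X, v⟫_ℝ) ∧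
    (∃ μ : ℝ, ∀ a b, ⟪a, v⟫_ℝ = 0 → ⟪b, v⟫_ℝ = 0 → Ric a b = μ * ⟪a, b⟫_ℝ) := by
  have hn3 : (3 : ℝ) ≤ (n : ℝ) := by exact_mod_cast hn
  have h1 : ((n : ℝ) - 1) ≠ 0 := by nlinarith
  have h2 : ((n : ℝ) - 2) ≠ 0 := by nlinarith
  have hvv : ⟪v, v⟫_ℝ ≠ 0 := by
    intro h; exact hv (inner_self_eq_zero.mp h)
  obtain ⟨κ, hκ⟩ : ∃ κ : ℝ, Ric v v = κ * ⟪v, v⟫_ℝ :=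
    ⟨Ric v v / ⟪v, v⟫_ℝ, (div_mul_cancel₀ _ hvv).symm⟩
  -- (2) eigenvector property
  have hkey : ∀ X, Ric X v = κ * ⟪X, v⟫_ℝ := by
    intro X
    have h := hD0 X v v
    rw [hD] at h
    have ht : Ric X v * ⟪v, v⟫_ℝ = Ric v v * ⟪X, v⟫_ℝ := by
      set s1 := ⟪v, v⟫_ℝ with hs1
      set s2 := ⟪X, v⟫_ℝ with hs2
      field_simp at h
      have h'' : (Ric X v * s1 - Ric v v * s2) * (((n:ℝ)-2)^3 * ((n:ℝ)-1)) = 0 := by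
        linear_combination (-((n:ℝ)-2)^2*((n:ℝ)-1)) * h
      have hfac : (((n:ℝ)-2)^3 * ((n:ℝ)-1)) ≠ 0 := mul_ne_zero (pow_ne_zero 3 h2) h1
      have := (mul_eq_zero.mp h'').resolve_right hfac
      linarith
    rw [hκ] at ht
    have : Ric X v * ⟪v, v⟫_ℝ = κ * ⟪X, v⟫_ℝ * ⟪v, v⟫_ℝ := by linear_combination ht
    exact mul_right_cancel₀ hvv this
  -- (1) p is a multiple of v
  have hc : p = (2 * (rho - κ) / m) • v := by
    have hx : ∀ X : EuclideanSpace ℝ (Fin n),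
        ⟪X, p - (2 * (rho - κ) / m) • v⟫_ℝ = 0 := by
      intro X
      have h := hRicv X
      rw [hkey X] at h
      rw [inner_sub_right, real_inner_smul_right]
      set s2 := ⟪X, v⟫_ℝ with hs2
      set ip := ⟪X, p⟫_ℝ with hip
      field_simp
      linear_combination 2 * h
    have h0 := hx (p - (2 * (rho - κ) / m) • v)
    rw [inner_self_eq_zero, sub_eq_zero] at h0
    exact h0
  refine ⟨⟨_, hc⟩, ⟨κ, hkey⟩, ?_⟩
  -- (3) Ric on v-perp
  refine ⟨(scal * ⟪v, v⟫_ℝ - Ric v v) / (((n : ℝ) - 1) * ⟪v, v⟫_ℝ), ?_⟩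
  intro a b ha hb
  have h := hD0 v a b
  rw [hD] at h
  have hav : Ric a v = 0 := by rw [hkey a, ha, mul_zero]
  have hbv : Ric v b = 0 := by rw [hRicSymm v b, hkey b, hb, mul_zero]
  have hva : ⟪v, a⟫_ℝ = 0 := by rw [real_inner_comm]; exact ha
  have hvb : ⟪v, b⟫_ℝ = 0 := by rw [real_inner_comm]; exact hb
  simp only [hav, hbv, hva, hvb, mul_zero, zero_mul, sub_zero] at h
  set s := ⟪v, v⟫_ℝ with hs
  set w := ⟪a, b⟫_ℝ with hw
  have h'' : (Ric a b * (((n:ℝ)-1) * s) - (scal * s - Ric v v) * w) *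
      (((n:ℝ)-1) * ((n:ℝ)-2)^2) = 0 := by
    field_simp at h
    linear_combination (((n:ℝ)-1)*((n:ℝ)-2)^2) * h
  have hfac : (((n:ℝ)-1) * ((n:ℝ)-2)^2) ≠ 0 := mul_ne_zero h1 (pow_ne_zero 2 h2)
  have hR := (mul_eq_zero.mp h'').resolve_right hfac
  field_simp
  linarith
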